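/- arXiv:math/0106082 — 6 statements merged into one kernel-verified Lean document; each statement's English description precedes it below -/
import Mathlib

section
/- If U is a unidependent set of a matroid M and x ∈ U is a non-loop element, then U \ {x} is a unidependent set of the contraction M/x. -/
open Set

/-- A circuit of a matroid: a minimal dependent set. -/
def IsCircuit {α : Type*} (M : Matroid α) (C : Set α) : Prop :=
  M.Dep C ∧ ∀ D, D ⊂ C → ¬ M.Dep D

lemma exists_circuit_subset_aux {α : Type*} (M : Matroid α) (hE : M.E.Finite) :
    ∀ n (S : Set α), S.ncard ≤ n → M.Dep S → ∃ C, C ⊆ S ∧ IsCircuit M C := by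
  intro n
  induction n with
  | zero =>
    intro S hn hS
    have hfin : S.Finite := hE.subset hS.subset_ground
    have : S = ∅ := by
      rw [← Set.ncard_eq_zero hfin]; omega
    exact absurd (this ▸ hS) (M.empty_indep.not_dep)
  | succ n ih =>
    intro S hn hS
    have hfin : S.Finite := hE.subset hS.subset_ground
    by_cases h : ∀ D, D ⊂ S → ¬ M.Dep D
    · exact ⟨S, subset_rfl, hS, h⟩
    · push_neg at h
      obtain ⟨D, hD, hDdep⟩ := h
      have hlt : D.ncard < S.ncard := Set.ncard_lt_ncard hD hfin
      obtain ⟨C, hCD, hC⟩ := ih D (by omega) hDdep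
      exact ⟨C, hCD.trans hD.subset, hC⟩

/-- If `U` is a unidependent set of `M` (contains exactly one circuit) and `x ∈ U`
is a non-loop element, then `U \ {x}` is a unidependent set of the contraction `M/x`
(here `N` is the contraction `M/x`, characterized by its ground set and
independent sets). -/
theorem unidependent_contract {α : Type*} (M : Matroid α) (hE : M.E.Finite)
    (x : α) (hx : M.Indep {x})
    (U : Set α) (hUE : U ⊆ M.E) (hxU : x ∈ U)
    (hU : ∃! C, IsCircuit M C ∧ C ⊆ U)
    (N : Matroid α) (hNE : N.E = M.E \ {x})
    (hNI : ∀ I, N.Indep I ↔ x ∉ I ∧ M.Indep (insert x I)) :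
    ∃! C, IsCircuit N C ∧ C ⊆ U \ {x} := by
  obtain ⟨C₀, ⟨hC₀circ, hC₀U⟩, huniq⟩ := hU
  have hxE : x ∈ M.E := hUE hxU
  have hC₀E : C₀ ⊆ M.E := hC₀circ.1.subset_ground
  -- For any M-dep subset D of U with x ∈ D (in the form insert x D'), C₀ ⊆ it.
  have key : ∀ S : Set α, S ⊆ U → M.Dep S → C₀ ⊆ S := by
    intro S hSU hSdep
    obtain ⟨C, hCS, hCcirc⟩ := exists_circuit_subset_aux M hE S.ncard S le_rfl hSdep
    have : C = C₀ := huniq C ⟨hCcirc, hCS.trans hSU⟩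
    exact this ▸ hCS
  -- C₀ \ {x} is N-dependent.
  have hNdep : N.Dep (C₀ \ {x}) := by
    rw [Matroid.dep_iff, hNI, hNE]
    constructor
    · rintro ⟨-, hind⟩
      have hsub : C₀ ⊆ insert x (C₀ \ {x}) := by
        intro y hy
        by_cases hyx : y = x
        · subst hyx; exact mem_insert _ _
        · exact mem_insert_of_mem _ ⟨hy, hyx⟩
      exact hC₀circ.1.not_indep (hind.subset hsub)
    · exact diff_subset_diff_left hC₀E
  -- any N-dep set D' ⊆ U \ {x} satisfies C₀ \ {x} ⊆ D'
  have key2 : ∀ D : Set α, D ⊆ U \ {x} → N.Dep D → C₀ \ {x} ⊆ D := by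
    intro D hDU hDdep
    have hxD : x ∉ D := fun h => (hDU h).2 rfl
    have hMdep : M.Dep (insert x D) := by
      rw [Matroid.dep_iff]
      refine ⟨fun hind => ?_, insert_subset hxE ((hDU.trans diff_subset).trans hUE)⟩
      exact hDdep.not_indep ((hNI D).mpr ⟨hxD, hind⟩)
    have hsub : insert x D ⊆ U := insert_subset hxU (hDU.trans diff_subset)
    have hC₀sub : C₀ ⊆ insert x D := key _ hsub hMdep
    intro y hy
    rcases hC₀sub hy.1 with h | h
    · exact absurd h hy.2
    · exact h
  refine ⟨C₀ \ {x}, ⟨⟨hNdep, ?_⟩, diff_subset_diff_left hC₀U⟩, ?_⟩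
  · intro D hD hDdep
    have : C₀ \ {x} ⊆ D :=
      key2 D (hD.subset.trans (diff_subset_diff_left hC₀U)) hDdep
    exact absurd (hD.trans_subset this) (lt_irrefl _)
  · rintro C' ⟨⟨hC'dep, hC'min⟩, hC'U⟩
    have hsub : C₀ \ {x} ⊆ C' := key2 C' hC'U hC'dep
    by_contra hne
    exact hC'min (C₀ \ {x}) (hsub.ssubset_of_ne (Ne.symm hne)) hNdep
end

section
/- Let M be a simple matroid on the ground set {1,...,n}. Then the family of NBC sets of M is the disjoint union of the NBC sets of M\n and the sets I ∪ {n} where I ranges over the NBC sets of M/n. Consequently, for each ℓ, |NBC_ℓ(M)| = |NBC_ℓ(M\n)| + |NBC_{ℓ-1}(M/n)|. -/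
open Set

def BrokenCircuit {α : Type*} [LinearOrder α] (M : Matroid α) (B : Set α) : Prop :=
  ∃ C m, IsCircuit M C ∧ m ∈ C ∧ (∀ y ∈ C, m ≤ y) ∧ (C \ {m}).Nonempty ∧ B = C \ {m}

def NBC {α : Type*} [LinearOrder α] (M : Matroid α) (X : Set α) : Prop :=
  M.Indep X ∧ ∀ B, BrokenCircuit M B → ¬ B ⊆ X

lemma exists_circuit_subset' {α : Type*} {M : Matroid α} (hE : M.E.Finite) :
    ∀ k : ℕ, ∀ D : Set α, D.ncard ≤ k → M.Dep D → ∃ C, C ⊆ D ∧ IsCircuit M C := by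
  intro k
  induction k with
  | zero =>
    intro D hcard hD
    have hfin : D.Finite := hE.subset hD.subset_ground
    have : D = ∅ := by rw [← Set.ncard_eq_zero hfin]; omega
    subst this
    exact absurd M.empty_indep hD.not_indep
  | succ k ih =>
    intro D hcard hD
    have hfin : D.Finite := hE.subset hD.subset_ground
    by_cases h : ∀ D', D' ⊂ D → ¬ M.Dep D'
    · exact ⟨D, subset_rfl, hD, h⟩
    · push_neg at h
      obtain ⟨D', hss, hdep⟩ := h
      have hlt : D'.ncard < D.ncard := Set.ncard_lt_ncard hss hfin
      obtain ⟨C, hC, hcirc⟩ := ih D' (by omega) hdep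
      exact ⟨C, hC.trans hss.subset, hcirc⟩

lemma exists_circuit_subset {α : Type*} {M : Matroid α} (hE : M.E.Finite) {D : Set α}
    (hD : M.Dep D) : ∃ C, C ⊆ D ∧ IsCircuit M C :=
  exists_circuit_subset' hE D.ncard D le_rfl hD

lemma false_of_dep_nbc {α : Type*} [LinearOrder α] {K : Matroid α} (hK : K.E.Finite)
    {D X : Set α} {m : α} (hdep : K.Dep D) (hsub : D ⊆ insert m X)
    (hlb : ∀ y ∈ D, m ≤ y) (hm : K.Indep {m}) (hX : NBC K X) : False := by
  obtain ⟨C, hCD, hcirc⟩ := exists_circuit_subset hK hdep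
  by_cases hmC : m ∈ C
  · have hmin : ∀ y ∈ C, m ≤ y := fun y hy => hlb y (hCD hy)
    have hsubX : C \ {m} ⊆ X := by
      rintro y ⟨hyC, hym⟩
      rcases hsub (hCD hyC) with h | h
      · exact absurd h hym
      · exact h
    have hne : (C \ {m}).Nonempty := by
      by_contra hne
      rw [Set.not_nonempty_iff_eq_empty, Set.diff_eq_empty] at hne
      have : C = {m} := Set.Subset.antisymm hne (by simpa using hmC)
      rw [this] at hcirc
      exact hcirc.1.not_indep hm
    exact hX.2 _ ⟨C, m, hcirc, hmC, hmin, hne, rfl⟩ hsubX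
  · have hCX : C ⊆ X := by
      intro y hy
      rcases hsub (hCD hy) with h | h
      · exact absurd (h ▸ hy) hmC
      · exact h
    exact hcirc.1.not_indep (hX.1.subset hCX)

lemma restrict_dep_iff' {α : Type*} {M : Matroid α} {R D : Set α} (hR : R ⊆ M.E) :
    (M.restrict R).Dep D ↔ M.Dep D ∧ D ⊆ R := by
  rw [Matroid.dep_iff, Matroid.restrict_indep_iff, Matroid.restrict_ground_eq, Matroid.dep_iff]
  constructor
  · rintro ⟨h, hDR⟩
    exact ⟨⟨fun hi => h ⟨hi, hDR⟩, hDR.trans hR⟩, hDR⟩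
  · rintro ⟨⟨h, _⟩, hDR⟩
    exact ⟨fun hi => h hi.1, hDR⟩

lemma circuit_restrict_iff {α : Type*} {M : Matroid α} {R C : Set α} (hR : R ⊆ M.E) :
    IsCircuit (M.restrict R) C ↔ IsCircuit M C ∧ C ⊆ R := by
  unfold IsCircuit
  rw [restrict_dep_iff' hR]
  constructor
  · rintro ⟨⟨hdep, hCR⟩, hmin⟩
    exact ⟨⟨hdep, fun D hD hdep' =>
      hmin D hD ((restrict_dep_iff' hR).2 ⟨hdep', hD.subset.trans hCR⟩)⟩, hCR⟩
  · rintro ⟨⟨hdep, hmin⟩, hCR⟩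
    exact ⟨⟨hdep, hCR⟩, fun D hD hdep' => hmin D hD ((restrict_dep_iff' hR).1 hdep').1⟩

/-- For a simple matroid `M` on a linearly ordered finite ground set with maximum
element `n`, the family of NBC sets of `M` is the disjoint union of the NBC sets of
the deletion `M \ n` and the sets `I ∪ {n}` for `I` an NBC set of the contraction
`M/n` (here `N`); consequently `|NBC_ℓ(M)| = |NBC_ℓ(M \ n)| + |NBC_{ℓ-1}(M/n)|`. -/
theorem nbc_partition {α : Type*} [LinearOrder α] (M : Matroid α)
    (hE : M.E.Finite)
    (hsimple : (∀ x ∈ M.E, M.Indep {x}) ∧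
      ∀ x ∈ M.E, ∀ y ∈ M.E, x ≠ y → M.Indep {x, y})
    (n : α) (hnE : n ∈ M.E) (hn : ∀ y ∈ M.E, y ≤ n)
    (N : Matroid α) (hNE : N.E = M.E \ {n})
    (hNI : ∀ I, N.Indep I ↔ n ∉ I ∧ M.Indep (insert n I)) :
    ({X | NBC M X} =
        {X | NBC (M.restrict (M.E \ {n})) X} ∪ {Y | ∃ I, NBC N I ∧ Y = insert n I}) ∧
    (Disjoint {X | NBC (M.restrict (M.E \ {n})) X} {Y | ∃ I, NBC N I ∧ Y = insert n I}) ∧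
    (∀ ℓ : ℕ, 1 ≤ ℓ →
      {X | NBC M X ∧ X.ncard = ℓ}.ncard =
        {X | NBC (M.restrict (M.E \ {n})) X ∧ X.ncard = ℓ}.ncard +
          {I | NBC N I ∧ I.ncard = ℓ - 1}.ncard) := by
  have hNfin : N.E.Finite := hNE ▸ (hE.diff : (M.E \ {n}).Finite)
  -- key1 : NBC sets of M containing n contract to NBC sets of N
  have key1 : ∀ X, NBC M X → n ∈ X → NBC N (X \ {n}) := by
    intro X hX hnX
    constructor
    · rw [hNI]
      refine ⟨fun h => h.2 rfl, ?_⟩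
      rw [Set.insert_diff_singleton, Set.insert_eq_self.2 hnX]
      exact hX.1
    · rintro B ⟨C, m, hcirc, hmC, hmin, hne, rfl⟩ hBsub
      have hCE' : C ⊆ M.E \ {n} := hNE ▸ hcirc.1.subset_ground
      have hnC : n ∉ C := fun h => (hCE' h).2 rfl
      have hmE : m ∈ M.E := (hCE' hmC).1
      have hdep : M.Dep (insert n C) := by
        rw [Matroid.dep_iff]
        refine ⟨fun hind => hcirc.1.not_indep ((hNI C).2 ⟨hnC, hind⟩),
          Set.insert_subset hnE (hCE'.trans Set.diff_subset)⟩
      refine false_of_dep_nbc hE hdep ?_ ?_ (hsimple.1 m hmE) hX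
      · rintro y (rfl | hyC)
        · exact Set.mem_insert_of_mem _ hnX
        · by_cases hym : y = m
          · exact hym ▸ Set.mem_insert _ _
          · exact Set.mem_insert_of_mem _ (hBsub ⟨hyC, hym⟩).1
      · rintro y (rfl | hyC)
        · exact hn m hmE
        · exact hmin y hyC
  -- key2 : NBC sets of M avoiding n are NBC sets of the restriction
  have key2 : ∀ X, NBC M X → n ∉ X → NBC (M.restrict (M.E \ {n})) X := by
    intro X hX hnX
    have hXE : X ⊆ M.E \ {n} := Set.subset_diff_singleton hX.1.subset_ground hnX
    refine ⟨Matroid.restrict_indep_iff.2 ⟨hX.1, hXE⟩, ?_⟩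
    rintro B ⟨C, m, hcirc, hmC, hmin, hne, rfl⟩ hBX
    have h := (circuit_restrict_iff Set.diff_subset).1 hcirc
    exact hX.2 _ ⟨C, m, h.1, hmC, hmin, hne, rfl⟩ hBX
  -- key3 : NBC sets of the restriction are NBC sets of M
  have key3 : ∀ X, NBC (M.restrict (M.E \ {n})) X → NBC M X := by
    intro X hX
    have hXind : M.Indep X := (Matroid.restrict_indep_iff.1 hX.1).1
    have hXsub : X ⊆ M.E \ {n} := (Matroid.restrict_indep_iff.1 hX.1).2
    refine ⟨hXind, ?_⟩
    rintro B ⟨C, m, hcirc, hmC, hmin, hne, rfl⟩ hBX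
    have hmn : m ≠ n := by
      rintro rfl
      obtain ⟨y, hyC, hym⟩ := hne
      exact hym (le_antisymm (hn y (hcirc.1.subset_ground hyC)) (hmin y hyC))
    have hnC : n ∉ C := by
      intro hnC2
      exact (hXsub (hBX ⟨hnC2, fun h => hmn ((Set.mem_singleton_iff.1 h).symm)⟩)).2 rfl
    have hCsub : C ⊆ M.E \ {n} := Set.subset_diff_singleton hcirc.1.subset_ground hnC
    exact hX.2 _ ⟨C, m, (circuit_restrict_iff Set.diff_subset).2 ⟨hcirc, hCsub⟩,
      hmC, hmin, hne, rfl⟩ hBX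
  -- key4 : NBC sets of N give NBC sets of M by inserting n
  have key4 : ∀ I, NBC N I → NBC M (insert n I) := by
    intro I hI
    have hnI : n ∉ I := ((hNI I).1 hI.1).1
    refine ⟨((hNI I).1 hI.1).2, ?_⟩
    rintro B ⟨C, m, hcirc, hmC, hmin, hne, rfl⟩ hBX
    have hCE : C ⊆ M.E := hcirc.1.subset_ground
    have hmn : m ≠ n := by
      rintro rfl
      obtain ⟨y, hyC, hym⟩ := hne
      exact hym (le_antisymm (hn y (hCE hyC)) (hmin y hyC))
    have hmNindep : N.Indep {m} := by
      rw [hNI]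
      refine ⟨fun h => hmn (Set.mem_singleton_iff.1 h).symm, ?_⟩
      have : insert n {m} = ({n, m} : Set α) := rfl
      rw [this]
      exact hsimple.2 n hnE m (hCE hmC) fun h => hmn h.symm
    by_cases hnC : n ∈ C
    · have hdep : N.Dep (C \ {n}) := by
        rw [Matroid.dep_iff, hNE]
        refine ⟨?_, Set.diff_subset_diff_left hCE⟩
        intro hind
        have h2 := ((hNI _).1 hind).2
        rw [Set.insert_diff_singleton, Set.insert_eq_self.2 hnC] at h2
        exact hcirc.1.not_indep h2
      refine false_of_dep_nbc hNfin hdep ?_ ?_ hmNindep hI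
      · rintro y ⟨hyC, hyn⟩
        by_cases hym : y = m
        · exact hym ▸ Set.mem_insert _ _
        · rcases hBX ⟨hyC, hym⟩ with rfl | h
          · exact absurd rfl hyn
          · exact Set.mem_insert_of_mem _ h
      · rintro y ⟨hyC, _⟩
        exact hmin y hyC
    · have hdep : N.Dep C := by
        rw [Matroid.dep_iff, hNE]
        refine ⟨?_, Set.subset_diff_singleton hCE hnC⟩
        intro hind
        exact hcirc.1.not_indep (((hNI C).1 hind).2.subset (Set.subset_insert _ _))
      refine false_of_dep_nbc hNfin hdep ?_ ?_ hmNindep hI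
      · intro y hyC
        by_cases hym : y = m
        · exact hym ▸ Set.mem_insert _ _
        · rcases hBX ⟨hyC, hym⟩ with rfl | h
          · exact absurd hyC hnC
          · exact Set.mem_insert_of_mem _ h
      · exact fun y hy => hmin y hy
  -- first part: the set equality
  have heq : {X | NBC M X} =
      {X | NBC (M.restrict (M.E \ {n})) X} ∪ {Y | ∃ I, NBC N I ∧ Y = insert n I} := by
    ext X
    simp only [Set.mem_setOf_eq, Set.mem_union]
    constructor
    · intro h
      by_cases hnX : n ∈ X
      · right
        refine ⟨X \ {n}, key1 X h hnX, ?_⟩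
        rw [Set.insert_diff_singleton, Set.insert_eq_self.2 hnX]
      · left
        exact key2 X h hnX
    · rintro (h | ⟨I, hI, rfl⟩)
      · exact key3 X h
      · exact key4 I hI
  -- second part: disjointness
  have hdisj : Disjoint {X | NBC (M.restrict (M.E \ {n})) X}
      {Y | ∃ I, NBC N I ∧ Y = insert n I} := by
    rw [Set.disjoint_left]
    rintro X hX ⟨I, hI, rfl⟩
    have : insert n I ⊆ M.E \ {n} := (Matroid.restrict_indep_iff.1 hX.1).2
    exact (this (Set.mem_insert _ _)).2 rfl
  refine ⟨heq, hdisj, ?_⟩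
  -- third part: cardinalities
  intro ℓ hℓ
  have hfinsub : {I | NBC N I ∧ I.ncard = ℓ - 1}.Finite :=
    hNfin.finite_subsets.subset fun I hI => hI.1.1.subset_ground
  have hS : {X | NBC M X ∧ X.ncard = ℓ} =
      {X | NBC (M.restrict (M.E \ {n})) X ∧ X.ncard = ℓ} ∪
        (insert n '' {I | NBC N I ∧ I.ncard = ℓ - 1}) := by
    ext X
    simp only [Set.mem_setOf_eq, Set.mem_union, Set.mem_image]
    constructor
    · rintro ⟨hX, hcard⟩
      have hX2 : X ∈ {X | NBC (M.restrict (M.E \ {n})) X} ∪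
          {Y | ∃ I, NBC N I ∧ Y = insert n I} := heq ▸ hX
      rcases hX2 with h | ⟨I, hI, rfl⟩
      · exact Or.inl ⟨h, hcard⟩
      · refine Or.inr ⟨I, ⟨hI, ?_⟩, rfl⟩
        have hnI : n ∉ I := fun h => ((hNE ▸ hI.1.subset_ground) h).2 rfl
        have hIfin : I.Finite := hNfin.subset hI.1.subset_ground
        have := Set.ncard_insert_of_notMem hnI hIfin
        omega
    · rintro (⟨h, hcard⟩ | ⟨I, ⟨hI, hIcard⟩, rfl⟩)
      · have : X ∈ {X | NBC M X} := by rw [heq]; exact Or.inl h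
        exact ⟨this, hcard⟩
      · have hmem : insert n I ∈ {X | NBC M X} := by
          rw [heq]; exact Or.inr ⟨I, hI, rfl⟩
        have hnI : n ∉ I := fun h => ((hNE ▸ hI.1.subset_ground) h).2 rfl
        have hIfin : I.Finite := hNfin.subset hI.1.subset_ground
        have := Set.ncard_insert_of_notMem hnI hIfin
        exact ⟨hmem, by omega⟩
  have hfin1 : {X | NBC (M.restrict (M.E \ {n})) X ∧ X.ncard = ℓ}.Finite :=
    hE.finite_subsets.subset fun X hX =>
      ((Matroid.restrict_indep_iff.1 hX.1.1).2).trans Set.diff_subset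
  have hfin2 : (insert n '' {I | NBC N I ∧ I.ncard = ℓ - 1}).Finite := hfinsub.image _
  have hdisj2 : Disjoint {X | NBC (M.restrict (M.E \ {n})) X ∧ X.ncard = ℓ}
      (insert n '' {I | NBC N I ∧ I.ncard = ℓ - 1}) := by
    refine hdisj.mono (fun X hX => hX.1) ?_
    rintro Y ⟨I, ⟨hI, _⟩, rfl⟩
    exact ⟨I, hI, rfl⟩
  have hinj : Set.InjOn (insert n) {I | NBC N I ∧ I.ncard = ℓ - 1} := by
    intro I hI J hJ h
    have hnI : n ∉ I := fun hh => ((hNE ▸ hI.1.1.subset_ground) hh).2 rfl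
    have hnJ : n ∉ J := fun hh => ((hNE ▸ hJ.1.1.subset_ground) hh).2 rfl
    calc I = insert n I \ {n} := (Set.insert_diff_self_of_notMem hnI).symm
      _ = insert n J \ {n} := by rw [h]
      _ = J := Set.insert_diff_self_of_notMem hnJ
  rw [hS, Set.ncard_union_eq hdisj2 hfin1 hfin2, Set.ncard_image_of_injOn hinj]
end

section
/- Let C and C' be two circuits of a loop-free matroid M on a linearly ordered ground set, each satisfying the property that its minimum element equals the minimum of cl(C) (resp. cl(C')) and that C \ min(C) (resp. C' \ min(C')) is inclusion-minimal among broken circuits with this property. If C' \ min(C') ⊆ C \ {c} for some c ∈ C with c ≠ min(C), then a contradiction follows; that is, no such containment can hold for distinct C, C' unless c = min(C). -/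
open Set

/-- Let `C` and `C'` be circuits of a loop-free matroid `M` on a linearly ordered
finite ground set, with minimum elements `m` and `m'` respectively, each satisfying:
its minimum equals the minimum of its closure, and its broken circuit is
inclusion-minimal among broken circuits of circuits with this property.  If
`C' \ {m'} ⊆ C \ {c}` for some `c ∈ C`, then `c = m`; that is, no such containment
can hold with `c ≠ min C`. -/
theorem grobner_reduced {α : Type*} [LinearOrder α] (M : Matroid α)
    (hE : M.E.Finite) (hloopfree : ∀ x ∈ M.E, M.Indep {x})
    (C C' : Set α) (m m' : α)
    (hC : IsCircuit M C) (hC' : IsCircuit M C')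
    (hmC : m ∈ C) (hmmin : ∀ y ∈ C, m ≤ y) (hmcl : ∀ y ∈ M.closure C, m ≤ y)
    (hm'C : m' ∈ C') (hm'min : ∀ y ∈ C', m' ≤ y) (hm'cl : ∀ y ∈ M.closure C', m' ≤ y)
    (hCminimal : ∀ D d, IsCircuit M D → d ∈ D → (∀ y ∈ D, d ≤ y) →
      (∀ y ∈ M.closure D, d ≤ y) → D \ {d} ⊆ C \ {m} → D \ {d} = C \ {m})
    (hC'minimal : ∀ D d, IsCircuit M D → d ∈ D → (∀ y ∈ D, d ≤ y) →
      (∀ y ∈ M.closure D, d ≤ y) → D \ {d} ⊆ C' \ {m'} → D \ {d} = C' \ {m'})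
    (c : α) (hc : c ∈ C) (hsub : C' \ {m'} ⊆ C \ {c}) :
    c = m := by
  by_contra hcm
  have hC'E : C' ⊆ M.E := hC'.1.subset_ground
  have hssub : C' \ {m'} ⊂ C' := Set.sdiff_singleton_ssubset.mpr hm'C
  have hnd := hC'.2 _ hssub
  have hIndep : M.Indep (C' \ {m'}) := by
    rw [Matroid.dep_iff] at hnd
    push_neg at hnd
    exact not_not.mp (fun h => hnd h ((Set.diff_subset).trans hC'E))
  have hm'E : m' ∈ M.E := hC'E hm'C
  have hm'cl2 : m' ∈ M.closure (C' \ {m'}) := by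
    rw [hIndep.mem_closure_iff]
    left
    rw [Set.insert_diff_singleton, Set.insert_eq_self.mpr hm'C]
    exact hC'.1
  have hsubC : C' \ {m'} ⊆ C := fun x hx => (hsub hx).1
  have hm'clC : m' ∈ M.closure C := M.closure_subset_closure hsubC hm'cl2
  have hmm' : m ≤ m' := hmcl m' hm'clC
  have hsubm : C' \ {m'} ⊆ C \ {m} := by
    rintro x ⟨hxC', hxm'⟩
    refine ⟨hsubC ⟨hxC', hxm'⟩, fun h => ?_⟩
    rw [Set.mem_singleton_iff] at h
    subst h
    exact hxm' (le_antisymm hmm' (hm'min x hxC'))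
  have heq := hCminimal C' m' hC' hm'C hm'min hm'cl hsubm
  have hcmem : c ∈ C' \ {m'} := heq ▸ ⟨hc, hcm⟩
  exact (hsub hcmem).2 rfl
end

section
/- Let U be a unidependent set of a matroid M with unique circuit C(U) ⊆ U. Then in the exterior algebra, ∂e_U = ± (∂e_{C(U)}) ∧ e_{U \ C(U)}; in particular ∂e_U lies in the ideal generated by the circuit boundaries ∂e_C. -/
open Set

/-- The monomial `e_X`: the product, in increasing index order, of the generators
`e_i`, `i ∈ X`, in the exterior algebra on `e_1, …, e_n`. -/
noncomputable def eX (K : Type*) [Field K] {n : ℕ} (X : Finset (Fin n)) :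
    ExteriorAlgebra K (Fin n → K) :=
  ((X.sort (· ≤ ·)).map fun i => ExteriorAlgebra.ι K (Pi.single i (1 : K))).prod

/-- The boundary `∂e_X = Σ_{p=1}^{m} (-1)^p e_{X \ i_p}` for `X = {i_1 < … < i_m}`. -/
noncomputable def delB (K : Type*) [Field K] {n : ℕ} (X : Finset (Fin n)) :
    ExteriorAlgebra K (Fin n → K) :=
  ∑ i ∈ X, ((-1 : K) ^ (((X.filter fun j => j < i)).card + 1)) • eX K (X.erase i)

/-- The Orlik-Solomon ideal: the two-sided ideal (as a subspace) generated by the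
boundaries `∂e_C` of the circuits of `M`. -/
noncomputable def OSIdeal (K : Type*) [Field K] {n : ℕ} (M : Matroid (Fin n)) :
    Submodule K (ExteriorAlgebra K (Fin n → K)) :=
  Submodule.span K
    {x | ∃ a b : ExteriorAlgebra K (Fin n → K), ∃ C : Finset (Fin n),
      IsCircuit M (C : Set (Fin n)) ∧ x = a * delB K C * b}

section AuxProd

variable (K : Type*) [Field K] {n : ℕ}

noncomputable def genE (i : Fin n) : ExteriorAlgebra K (Fin n → K) :=
  ExteriorAlgebra.ι K (Pi.single i (1 : K))

noncomputable def prodE (l : List (Fin n)) : ExteriorAlgebra K (Fin n → K) :=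
  (l.map (genE K)).prod

lemma prodE_nil : prodE K ([] : List (Fin n)) = 1 := rfl

lemma prodE_cons (a : Fin n) (l : List (Fin n)) :
    prodE K (a :: l) = genE K a * prodE K l := by
  simp [prodE]

lemma prodE_append (l₁ l₂ : List (Fin n)) :
    prodE K (l₁ ++ l₂) = prodE K l₁ * prodE K l₂ := by
  simp [prodE]

lemma genE_anticomm (a b : Fin n) : genE K a * genE K b = -(genE K b * genE K a) := by
  have h := ExteriorAlgebra.ι_add_mul_swap (R := K) (M := Fin n → K)
    (Pi.single a (1:K)) (Pi.single b (1:K))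
  exact eq_neg_of_add_eq_zero_left h

lemma prodE_mul_gen (t : List (Fin n)) (m : Fin n) :
    prodE K t * genE K m = ((-1 : K) ^ t.length) • (genE K m * prodE K t) := by
  induction t with
  | nil => simp [prodE_nil]
  | cons a t ih =>
      rw [prodE_cons, mul_assoc, ih, mul_smul_comm, ← mul_assoc, genE_anticomm K a m,
        List.length_cons, pow_succ]
      rw [neg_mul, mul_assoc, smul_neg, mul_neg_one, neg_smul]

variable {K}

lemma sorted_filter_split {l : List (Fin n)} (hl : l.Pairwise (· ≤ ·)) (m : Fin n) :
    l.filter (fun a => decide (a < m)) ++ l.filter (fun a => decide (¬ a < m)) = l := by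
  induction l with
  | nil => simp
  | cons a l ih =>
      obtain ⟨h1, h2⟩ := List.pairwise_cons.mp hl
      by_cases h : a < m
      · rw [List.filter_cons_of_pos (by simpa using h), List.filter_cons_of_neg (by simpa using h),
          List.cons_append]
        exact congrArg (a :: ·) (ih h2)
      · have hall : ∀ b ∈ l, ¬ b < m := fun b hb hbm => h (lt_of_le_of_lt (h1 b hb) hbm)
        rw [List.filter_cons_of_neg (by simpa using h),
          List.filter_cons_of_pos (by simpa using h),
          List.filter_eq_nil_iff.mpr (by intro b hb; simpa using hall b hb),
          List.filter_eq_self.mpr (by intro b hb; simpa using hall b hb), List.nil_append]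

lemma sort_insert_eq (A : Finset (Fin n)) (m : Fin n) (hm : m ∉ A) :
    (insert m A).sort (· ≤ ·) =
      ((A.sort (· ≤ ·)).filter (fun a => decide (a < m))) ++
        m :: ((A.sort (· ≤ ·)).filter (fun a => decide (¬ a < m))) := by
  set l := A.sort (· ≤ ·) with hldef
  have hsl : l.Pairwise (· ≤ ·) := Finset.pairwise_sort _ _
  refine ((fun hp hs => List.Perm.eq_of_pairwise' (Finset.pairwise_sort _ _) hs hp) ?_ ?_)
  · refine ((Finset.sort_perm_toList _ (· ≤ ·)).trans ?_).trans (List.perm_middle).symm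
    refine ((Finset.toList_insert hm).trans ?_)
    refine List.Perm.cons m ?_
    refine ((Finset.sort_perm_toList _ (· ≤ ·)).symm.trans ?_)
    rw [sorted_filter_split hsl m]
  · rw [List.pairwise_append]
    have hf1 := hsl.sublist (List.filter_sublist (p := fun a => decide (a < m)) (l := l))
    have hf2 := hsl.sublist (List.filter_sublist (p := fun a => decide (¬ a < m)) (l := l))
    refine ⟨hf1, ?_, ?_⟩
    · rw [List.pairwise_cons]
      refine ⟨?_, hf2⟩
      intro b hb
      have := List.of_mem_filter hb
      simp only [decide_eq_true_eq] at this
      exact le_of_not_gt this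
    · intro a ha b hb
      have ha' := List.of_mem_filter ha
      simp only [decide_eq_true_eq] at ha'
      rcases List.mem_cons.mp hb with rfl | hb
      · exact le_of_lt ha'
      · have hb' := List.of_mem_filter hb
        simp only [decide_eq_true_eq] at hb'
        exact le_of_lt (lt_of_lt_of_le ha' (le_of_not_gt hb'))

lemma length_filter_sort (A : Finset (Fin n)) (p : Fin n → Prop) [DecidablePred p] :
    ((A.sort (· ≤ ·)).filter (fun a => decide (p a))).length = (A.filter p).card := by
  have h1 : (Multiset.filter p (↑(A.sort (· ≤ ·))) : Multiset (Fin n)) =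
      ↑((A.sort (· ≤ ·)).filter (fun a => decide (p a))) :=
    Multiset.filter_coe p _
  rw [Finset.sort_eq] at h1
  have := congrArg Multiset.card h1
  simpa [Finset.card_def, Finset.filter_val] using this.symm

variable (K)

lemma eX_eq_prodE (X : Finset (Fin n)) : eX K X = prodE K (X.sort (· ≤ ·)) := rfl

lemma eX_mul_gen (A : Finset (Fin n)) (m : Fin n) (hm : m ∉ A) :
    eX K A * genE K m =
      ((-1 : K) ^ ((A.filter (fun a => m < a)).card)) • eX K (insert m A) := by
  have hsplit := sorted_filter_split (Finset.pairwise_sort A (· ≤ ·)) m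
  have hlen : ((A.sort (· ≤ ·)).filter (fun a => decide (¬ a < m))).length
      = (A.filter (fun a => m < a)).card := by
    rw [length_filter_sort A (fun a => ¬ a < m)]
    congr 1
    apply Finset.filter_congr
    intro a ha
    have : a ≠ m := fun h => hm (h ▸ ha)
    simp only [not_lt]
    exact ⟨fun h => lt_of_le_of_ne h (Ne.symm this), fun h => le_of_lt h⟩
  rw [eX_eq_prodE, eX_eq_prodE, sort_insert_eq A m hm, prodE_append, prodE_cons]
  conv_lhs => rw [← hsplit]
  rw [prodE_append, mul_assoc, prodE_mul_gen, hlen, mul_smul_comm]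

lemma gen_mul_eX (B : Finset (Fin n)) (m : Fin n) (hm : ∀ b ∈ B, m < b) :
    eX K (insert m B) = genE K m * eX K B := by
  have hmB : m ∉ B := fun h => lt_irrefl m (hm m h)
  rw [eX_eq_prodE, eX_eq_prodE, sort_insert_eq B m hmB]
  have h1 : (B.sort (· ≤ ·)).filter (fun a => decide (a < m)) = [] := by
    apply List.filter_eq_nil_iff.mpr
    intro b hb
    have hbB : b ∈ B := (Finset.mem_sort (· ≤ ·)).mp hb
    simpa using not_lt_of_gt (hm b hbB)
  have h2 : (B.sort (· ≤ ·)).filter (fun a => decide (¬ a < m)) = B.sort (· ≤ ·) := by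
    apply List.filter_eq_self.mpr
    intro b hb
    have hbB : b ∈ B := (Finset.mem_sort (· ≤ ·)).mp hb
    simpa using not_lt_of_gt (hm b hbB)
  rw [h1, h2, List.nil_append, prodE_cons]

lemma eX_mul_eX (B : Finset (Fin n)) : ∀ (A : Finset (Fin n)), Disjoint A B →
    eX K A * eX K B =
      ((-1 : K) ^ (∑ b ∈ B, (A.filter (fun a => b < a)).card)) • eX K (A ∪ B) := by
  induction B using Finset.induction_on_min with
  | empty =>
      intro A _
      simp [eX_eq_prodE, Finset.sort_empty, prodE_nil]
  | insert m B hmin ih =>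
      intro A hdisj
      have hmB : m ∉ B := fun h => lt_irrefl m (hmin m h)
      have hmA : m ∉ A := fun h =>
        Finset.disjoint_left.mp hdisj h (Finset.mem_insert_self m B)
      have hAB : Disjoint (insert m A) B := by
        rw [Finset.disjoint_left]
        intro a ha hb
        rcases Finset.mem_insert.mp ha with rfl | ha
        · exact hmB hb
        · exact Finset.disjoint_left.mp hdisj ha (Finset.mem_insert_of_mem hb)
      have hfil : ∀ b ∈ B, ((insert m A).filter (fun a => b < a)).card
          = (A.filter (fun a => b < a)).card := by
        intro b hb
        rw [Finset.filter_insert, if_neg (not_lt_of_gt (hmin b hb))]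
      rw [gen_mul_eX K B m hmin, ← mul_assoc, eX_mul_gen K A m hmA, smul_mul_assoc,
        ih (insert m A) hAB, smul_smul, ← pow_add, Finset.sum_insert hmB]
      have hexp : (∑ b ∈ B, ((insert m A).filter (fun a => b < a)).card)
          = ∑ b ∈ B, (A.filter (fun a => b < a)).card :=
        Finset.sum_congr rfl hfil
      have hset : insert m A ∪ B = A ∪ insert m B := by
        ext x
        simp only [Finset.mem_union, Finset.mem_insert]
        tauto
      rw [hexp, hset]

end AuxProd

lemma dep_has_circuit {n : ℕ} (M : Matroid (Fin n)) :
    ∀ (k : ℕ) (D : Set (Fin n)), D.ncard ≤ k → M.Dep D →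
      ∃ C', C' ⊆ D ∧ IsCircuit M C' := by
  intro k
  induction k with
  | zero =>
      intro D hcard hD
      have hD0 : D = ∅ := by
        have := (Set.ncard_eq_zero (Set.toFinite D)).mp (Nat.le_zero.mp hcard)
        exact this
      rw [hD0] at hD
      exact absurd M.empty_indep hD.not_indep
  | succ k ih =>
      intro D hcard hD
      by_cases hc : ∀ D', D' ⊂ D → ¬ M.Dep D'
      · exact ⟨D, subset_rfl, hD, hc⟩
      · push_neg at hc
        obtain ⟨D', hss, hD'⟩ := hc
        have hlt : D'.ncard ≤ k := by
          have := Set.ncard_lt_ncard hss (Set.toFinite D)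
          omega
        obtain ⟨C', hs, hcirc⟩ := ih D' hlt hD'
        exact ⟨C', hs.trans hss.subset, hcirc⟩

open Classical

/-- The Orlik-Solomon `χ`-boundary `∂e_X = Σ_p (-1)^p χ(X \ i_p) e_{X \ i_p}`, where
for the Orlik-Solomon algebra `χ` of an (increasingly ordered) independent set is `1`
and `χ` of a dependent set is `0`.  For a circuit `C` this coincides with
`∂e_C = Σ_p (-1)^p e_{C \ i_p}`. -/
noncomputable def chiB (K : Type*) [Field K] {n : ℕ} (M : Matroid (Fin n))
    (X : Finset (Fin n)) : ExteriorAlgebra K (Fin n → K) :=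
  ∑ i ∈ X, (if M.Indep ((X.erase i : Finset (Fin n)) : Set (Fin n)) then
      ((-1 : K) ^ (((X.filter fun j => j < i)).card + 1)) else 0) • eX K (X.erase i)

/-- If `U` is a unidependent set of `M` with unique circuit `C ⊆ U`, then
`∂e_U = ± (∂e_C) * e_{U \ C}` in the exterior algebra; in particular `∂e_U` lies in
the ideal generated by the circuit boundaries. -/
theorem boundary_unidependent {K : Type*} [Field K] {n : ℕ} (M : Matroid (Fin n))
    (U C : Finset (Fin n)) (hUE : (U : Set (Fin n)) ⊆ M.E)
    (hC : IsCircuit M (C : Set (Fin n))) (hCcard : 1 < C.card) (hCU : C ⊆ U)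
    (huni : ∃! D : Set (Fin n), IsCircuit M D ∧ D ⊆ (U : Set (Fin n))) :
    (∃ ε : K, (ε = 1 ∨ ε = -1) ∧ chiB K M U = ε • (chiB K M C * eX K (U \ C))) ∧
      chiB K M U ∈ OSIdeal K M := by
  have hCdep : M.Dep (C : Set (Fin n)) := hC.1
  have hCE : (C : Set (Fin n)) ⊆ M.E := hCdep.subset_ground
  -- every one-element-deleted subset of a circuit is independent
  have hCerase : ∀ i ∈ C, M.Indep ((C.erase i : Finset (Fin n)) : Set (Fin n)) := by
    intro i hi
    by_contra hind
    have hss : ((C.erase i : Finset (Fin n)) : Set (Fin n)) ⊂ (C : Set (Fin n)) :=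
      Finset.coe_ssubset.mpr (Finset.erase_ssubset hi)
    have hdep : M.Dep ((C.erase i : Finset (Fin n)) : Set (Fin n)) :=
      Matroid.dep_iff.mpr ⟨hind, hss.subset.trans hCE⟩
    exact hC.2 _ hss hdep
  -- deleting i from U gives an independent set iff i ∈ C
  have hiff : ∀ i ∈ U, (M.Indep ((U.erase i : Finset (Fin n)) : Set (Fin n)) ↔ i ∈ C) := by
    intro i hiU
    constructor
    · intro hind
      by_contra hiC
      have hsub : (C : Set (Fin n)) ⊆ ((U.erase i : Finset (Fin n)) : Set (Fin n)) := by
        intro x hx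
        have hxC : x ∈ C := by exact_mod_cast hx
        have : x ∈ U.erase i := Finset.mem_erase.mpr ⟨fun h => hiC (h ▸ hxC), hCU hxC⟩
        exact_mod_cast this
      exact hCdep.not_indep (hind.subset hsub)
    · intro hiC
      by_contra hind
      have hdep : M.Dep ((U.erase i : Finset (Fin n)) : Set (Fin n)) :=
        Matroid.dep_iff.mpr ⟨hind,
          (Finset.coe_subset.mpr (Finset.erase_subset i U)).trans hUE⟩
      obtain ⟨D, hDsub, hDcirc⟩ :=
        dep_has_circuit M (((U.erase i : Finset (Fin n)) : Set (Fin n)).ncard) _ le_rfl hdep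
      obtain ⟨D₀, _, huniq⟩ := huni
      have h1 : D = D₀ := huniq D ⟨hDcirc,
        hDsub.trans ((Finset.coe_subset.mpr (Finset.erase_subset i U)))⟩
      have h2 : (C : Set (Fin n)) = D₀ := huniq _ ⟨hC, Finset.coe_subset.mpr hCU⟩
      have hiD : (i : Fin n) ∈ D := by
        rw [h1, ← h2]
        exact_mod_cast hiC
      have : i ∈ U.erase i := by exact_mod_cast hDsub hiD
      exact (Finset.mem_erase.mp this).1 rfl
  -- chiB of the circuit
  have hchiC : chiB K M C
      = ∑ i ∈ C, ((-1 : K) ^ ((C.filter fun j => j < i).card + 1)) • eX K (C.erase i) := by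
    rw [chiB]
    exact Finset.sum_congr rfl fun i hi => by rw [if_pos (hCerase i hi)]
  -- chiB of U
  have hchiU : chiB K M U
      = ∑ i ∈ C, ((-1 : K) ^ ((U.filter fun j => j < i).card + 1)) • eX K (U.erase i) := by
    rw [chiB]
    rw [← Finset.sum_subset hCU (fun i hiU hiC => by
      rw [if_neg (fun hind => hiC ((hiff i hiU).mp hind)), zero_smul])]
    exact Finset.sum_congr rfl fun i hi => by
      rw [if_pos ((hiff i (hCU hi)).mpr hi)]
  set N : ℕ := ∑ b ∈ U \ C, (C.filter (fun a => b < a)).card with hN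
  -- position bookkeeping
  have hpu : ∀ i : Fin n, (U.filter fun j => j < i).card
      = (C.filter fun j => j < i).card + ((U \ C).filter fun j => j < i).card := by
    intro i
    conv_lhs => rw [show U = C ∪ (U \ C) from (Finset.union_sdiff_of_subset hCU).symm]
    rw [Finset.filter_union,
      Finset.card_union_of_disjoint (Finset.disjoint_filter_filter Finset.disjoint_sdiff)]
  have hNt : ∀ i ∈ C, (∑ b ∈ U \ C, ((C.erase i).filter (fun a => b < a)).card)
      + ((U \ C).filter fun j => j < i).card = N := by
    intro i hi
    rw [hN, Finset.card_filter (fun j => j < i) (U \ C), ← Finset.sum_add_distrib]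
    refine Finset.sum_congr rfl fun b _ => ?_
    rw [Finset.card_filter (fun a => b < a) (C.erase i), Finset.card_filter (fun a => b < a) C]
    rw [← Finset.sum_erase_add C _ hi]
  have hdisj : ∀ i : Fin n, Disjoint (C.erase i) (U \ C) := by
    intro i
    rw [Finset.disjoint_left]
    intro a ha hb
    exact (Finset.mem_sdiff.mp hb).2 (Finset.mem_of_mem_erase ha)
  have hunion : ∀ i ∈ C, (C.erase i) ∪ (U \ C) = U.erase i := by
    intro i hi
    ext x
    simp only [Finset.mem_union, Finset.mem_erase, Finset.mem_sdiff]
    have h1 : x ∈ C → x ∈ U := fun h => hCU h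
    have h2 : x = i → x ∈ C := fun h => h ▸ hi
    constructor
    · rintro (⟨hxi, hxC⟩ | ⟨hxU, hxC⟩)
      · exact ⟨hxi, h1 hxC⟩
      · exact ⟨fun h => hxC (h2 h), hxU⟩
    · rintro ⟨hxi, hxU⟩
      by_cases hxC : x ∈ C
      · exact Or.inl ⟨hxi, hxC⟩
      · exact Or.inr ⟨hxU, hxC⟩
  have hRHS : ((-1 : K) ^ N) • (chiB K M C * eX K (U \ C))
      = ∑ i ∈ C, ((-1 : K) ^ ((U.filter fun j => j < i).card + 1)) • eX K (U.erase i) := by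
    rw [hchiC, Finset.sum_mul, Finset.smul_sum]
    refine Finset.sum_congr rfl fun i hi => ?_
    rw [smul_mul_assoc, eX_mul_eX K (U \ C) (C.erase i) (hdisj i), hunion i hi,
      smul_smul, smul_smul]
    congr 1
    rw [← pow_add, ← pow_add, hpu i, ← hNt i hi]
    set S : ℕ := ∑ b ∈ U \ C, ((C.erase i).filter (fun a => b < a)).card
    set t : ℕ := ((U \ C).filter fun j => j < i).card
    set pc : ℕ := (C.filter fun j => j < i).card
    rw [show S + t + (pc + 1) + S = 2 * S + (pc + t + 1) by omega, pow_add, pow_mul,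
      neg_one_sq, one_pow, one_mul]
  have hmain : chiB K M U = ((-1 : K) ^ N) • (chiB K M C * eX K (U \ C)) :=
    hchiU.trans hRHS.symm
  constructor
  · refine ⟨(-1 : K) ^ N, ?_, hmain⟩
    rcases Nat.even_or_odd N with h | h
    · exact Or.inl h.neg_one_pow
    · exact Or.inr h.neg_one_pow
  · have hcd : chiB K M C = delB K C := by
      rw [hchiC, delB]
    rw [hmain, hcd]
    refine Submodule.smul_mem _ _ (Submodule.subset_span ?_)
    exact ⟨1, eX K (U \ C), C, hC, by rw [one_mul]⟩
end

section
/- Let M be a simple matroid of rank r on ground set {1,...,n} and let ℓ ≤ r. The number of NBC sets of M of size ℓ is independent of the linear ordering of the ground set; i.e., for any two linear orderings of {1,...,n}, the corresponding families of ℓ-element no-broken-circuit sets have the same cardinality. -/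
open Set

/-- A broken circuit with respect to a linear order relation `le`. -/
def BrokenCircuitR {α : Type*} (M : Matroid α) (le : α → α → Prop) (B : Set α) : Prop :=
  ∃ C m, IsCircuit M C ∧ m ∈ C ∧ (∀ y ∈ C, le m y) ∧ (C \ {m}).Nonempty ∧ B = C \ {m}

/-- An NBC set with respect to a linear order relation `le`. -/
def NBCR {α : Type*} (M : Matroid α) (le : α → α → Prop) (X : Set α) : Prop :=
  M.Indep X ∧ ∀ B, BrokenCircuitR M le B → ¬ B ⊆ X

namespace NBCaux

variable {α : Type*} {M : Matroid α} {le : α → α → Prop}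

/-- elements of `A` strictly above `e`. -/
def Abv (le : α → α → Prop) (A : Set α) (e : α) : Set α := {a ∈ A | a ≠ e ∧ le e a}

lemma Abv_subset {A : Set α} {e : α} : Abv le A e ⊆ A \ {e} := fun a ha => ⟨ha.1, ha.2.1⟩

/-- the set of "active" elements witnessing non-fixedness. -/
def S (M : Matroid α) (le : α → α → Prop) (A : Set α) : Set α :=
  {e ∈ M.E | e ∈ M.closure (Abv le A e)}

def NF (M : Matroid α) (le : α → α → Prop) (A : Set α) : Prop := (S M le A).Nonempty

lemma exists_min_finset (h : IsLinearOrder α le) (t : Finset α) (hne : t.Nonempty) :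
    ∃ m ∈ t, ∀ y ∈ t, le m y := by
  classical
  induction t using Finset.induction_on with
  | empty => simp at hne
  | @insert a t hat ih =>
    rcases t.eq_empty_or_nonempty with rfl | htne
    · exact ⟨a, Finset.mem_insert_self a _, by
        intro y hy
        rw [Finset.mem_insert] at hy
        rcases hy with rfl | hy
        · exact h.toRefl.refl y
        · simp at hy⟩
    · obtain ⟨m, hm, hmin⟩ := ih htne
      rcases h.toTotal.total a m with ham | hma
      · refine ⟨a, Finset.mem_insert_self a _, ?_⟩
        intro y hy
        rcases Finset.mem_insert.mp hy with rfl | hy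
        · exact h.toRefl.refl y
        · exact h.toIsPartialOrder.toIsPreorder.toIsTrans.trans _ _ _ ham (hmin y hy)
      · refine ⟨m, Finset.mem_insert_of_mem hm, ?_⟩
        intro y hy
        rcases Finset.mem_insert.mp hy with rfl | hy
        · exact hma
        · exact hmin y hy

lemma exists_min (h : IsLinearOrder α le) {s : Set α} (hfin : s.Finite) (hne : s.Nonempty) :
    ∃ m ∈ s, ∀ y ∈ s, le m y := by
  obtain ⟨m, hm, hmin⟩ := exists_min_finset h hfin.toFinset (by simpa using hne)
  exact ⟨m, by simpa using hm, fun y hy => hmin y (by simpa using hy)⟩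

lemma exists_circuit {D : Set α} (hfin : D.Finite) (hD : M.Dep D) :
    ∃ C, C ⊆ D ∧ IsCircuit M C := by
  obtain ⟨n, hn⟩ : ∃ n, D.ncard = n := ⟨_, rfl⟩
  induction n using Nat.strong_induction_on generalizing D with
  | _ n ih =>
  by_cases hmin : ∀ D', D' ⊂ D → ¬ M.Dep D'
  · exact ⟨D, Subset.rfl, hD, hmin⟩
  · push_neg at hmin
    obtain ⟨D', hss, hD'⟩ := hmin
    obtain ⟨C, hC1, hC2⟩ := ih (D'.ncard) (hn ▸ Set.ncard_lt_ncard hss hfin)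
      (hfin.subset hss.subset) hD' rfl
    exact ⟨C, hC1.trans hss.subset, hC2⟩

lemma circuit_mem_closure {C : Set α} {m : α} (hC : IsCircuit M C) (hm : m ∈ C) :
    m ∈ M.closure (C \ {m}) := by
  have hCE : C ⊆ M.E := hC.1.subset_ground
  have hind : M.Indep (C \ {m}) := by
    by_contra hcon
    exact hC.2 (C \ {m}) (Set.sdiff_singleton_ssubset.mpr hm)
      ⟨hcon, (Set.diff_subset).trans hCE⟩
  have : M.Dep (insert m (C \ {m})) := by
    rw [Set.insert_diff_singleton, Set.insert_eq_of_mem hm]; exact hC.1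
  exact (hind.insert_dep_iff.mp this).1

lemma not_nf_iff (h : IsLinearOrder α le) (hloop : ∀ x ∈ M.E, M.Indep {x})
    {A : Set α} (hA : A ⊆ M.E) (hfin : A.Finite) : ¬ NF M le A ↔ NBCR M le A := by
  constructor
  · intro hnf
    have hind : M.Indep A := by
      by_contra hcon
      obtain ⟨C, hCA, hC⟩ := exists_circuit hfin ⟨hcon, hA⟩
      have hCne : C.Nonempty := by
        rcases C.eq_empty_or_nonempty with rfl | hx
        · exact (hC.1.not_indep M.empty_indep).elim
        · exact hx
      obtain ⟨m, hmC, hmin⟩ := exists_min h (hfin.subset hCA) hCne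
      refine hnf ⟨m, hA (hCA hmC), ?_⟩
      refine M.closure_subset_closure ?_ (circuit_mem_closure hC hmC)
      rintro y ⟨hyC, hym⟩
      simp only [Set.mem_singleton_iff] at hym
      exact ⟨hCA hyC, hym, hmin y hyC⟩
    refine ⟨hind, ?_⟩
    rintro B ⟨C, m, hC, hmC, hmin, hne, rfl⟩ hBA
    refine hnf ⟨m, hC.1.subset_ground hmC, ?_⟩
    refine M.closure_subset_closure ?_ (circuit_mem_closure hC hmC)
    rintro y ⟨hyC, hym⟩
    simp only [Set.mem_singleton_iff] at hym
    exact ⟨hBA ⟨hyC, hym⟩, hym, hmin y hyC⟩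
  · rintro ⟨hind, hnb⟩ ⟨e, heE, hecl⟩
    have hXA : Abv le A e ⊆ A := fun a ha => ha.1
    have hXind : M.Indep (Abv le A e) := hind.subset hXA
    have heX : e ∉ Abv le A e := fun hx => hx.2.1 rfl
    have hdep : M.Dep (insert e (Abv le A e)) := hXind.insert_dep_iff.mpr ⟨hecl, heX⟩
    obtain ⟨C, hCsub, hC⟩ := exists_circuit ((hfin.subset hXA).insert e) hdep
    have heC : e ∈ C := by
      by_contra hec
      have hCX : C ⊆ Abv le A e := fun y hy =>
        ((hCsub hy).resolve_left (by rintro rfl; exact hec hy))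
      exact hC.1.not_indep (hXind.subset hCX)
    have hmin : ∀ y ∈ C, le e y := by
      intro y hy
      rcases hCsub hy with rfl | hy'
      · exact h.toRefl.refl y
      · exact hy'.2.2
    have hne : (C \ {e}).Nonempty := by
      rcases (C \ {e}).eq_empty_or_nonempty with hemp | hx
      · have hCe : C = {e} := by
          apply Set.Subset.antisymm
          · intro y hy
            by_contra hye
            exact absurd (Set.eq_empty_iff_forall_notMem.mp hemp y) (by simp [hy, hye])
          · simpa using heC
        exact (hC.1.not_indep (hCe ▸ hloop e heE)).elim
      · exact hx
    refine hnb (C \ {e}) ⟨C, e, hC, heC, hmin, hne, rfl⟩ ?_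
    rintro y ⟨hyC, hye⟩
    simp only [Set.mem_singleton_iff] at hye
    exact hXA ((hCsub hyC).resolve_left hye)

lemma S_subset_ground {A : Set α} : S M le A ⊆ M.E := fun e he => he.1

lemma abv_eq_of_diff_eq {A B : Set α} {m : α} (hd : B \ {m} = A \ {m}) :
    Abv le B m = Abv le A m := by
  ext a
  constructor <;> rintro ⟨ha, ham, hle⟩
  · have : a ∈ A \ {m} := hd ▸ ⟨ha, ham⟩
    exact ⟨this.1, ham, hle⟩
  · have : a ∈ B \ {m} := hd.symm ▸ ⟨ha, ham⟩
    exact ⟨this.1, ham, hle⟩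

lemma S_toggle (h : IsLinearOrder α le) {A B : Set α} (hBE : B ⊆ M.E) {m : α}
    (hm : m ∈ S M le A) (hmin : ∀ y ∈ S M le A, le m y) (hd : B \ {m} = A \ {m}) :
    m ∈ S M le B ∧ ∀ y ∈ S M le B, le m y := by
  have hAE : A ⊆ M.E := by
    intro a ha
    by_cases ham : a = m
    · exact ham ▸ hm.1
    · exact hBE (hd.symm ▸ (⟨ha, ham⟩ : a ∈ A \ {m}) : a ∈ B \ {m}).1
  have habv : Abv le B m = Abv le A m := abv_eq_of_diff_eq hd
  have hmB : m ∈ S M le B := ⟨hm.1, habv ▸ hm.2⟩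
  refine ⟨hmB, ?_⟩
  intro e heB
  rcases h.toTotal.total m e with hme | hem
  · exact hme
  by_cases hem' : e = m
  · exact hem' ▸ h.toRefl.refl e
  have hAm_subA : Abv le A m ⊆ Abv le A e := by
    rintro a ⟨ha, ham, hma⟩
    refine ⟨ha, ?_, h.toIsPartialOrder.toIsPreorder.toIsTrans.trans _ _ _ hem hma⟩
    rintro rfl
    exact hem' (h.toAntisymm.antisymm _ _ hem hma)
  have hAm_subB : Abv le A m ⊆ Abv le B e := by
    rintro a ⟨ha, ham, hma⟩
    have haB : a ∈ B := (hd.symm ▸ (⟨ha, ham⟩ : a ∈ A \ {m}) : a ∈ B \ {m}).1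
    refine ⟨haB, ?_, h.toIsPartialOrder.toIsPreorder.toIsTrans.trans _ _ _ hem hma⟩
    rintro rfl
    exact hem' (h.toAntisymm.antisymm _ _ hem hma)
  have hmclA : m ∈ M.closure (Abv le A e) := M.closure_subset_closure hAm_subA hm.2
  have hmclB : m ∈ M.closure (Abv le B e) :=
    M.closure_subset_closure hAm_subB (habv ▸ hm.2)
  have hsub1 : Abv le B e ⊆ M.closure (Abv le A e) := by
    rintro a ⟨ha, hae, hlea⟩
    by_cases ham : a = m
    · exact ham ▸ hmclA
    · have haA : a ∈ A := (hd ▸ (⟨ha, ham⟩ : a ∈ B \ {m}) : a ∈ A \ {m}).1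
      exact M.subset_closure _ (fun x hx => hAE hx.1) ⟨haA, hae, hlea⟩
  have hsub2 : Abv le A e ⊆ M.closure (Abv le B e) := by
    rintro a ⟨ha, hae, hlea⟩
    by_cases ham : a = m
    · exact ham ▸ hmclB
    · have haB : a ∈ B := (hd.symm ▸ (⟨ha, ham⟩ : a ∈ A \ {m}) : a ∈ B \ {m}).1
      exact M.subset_closure _ (fun x hx => hBE hx.1) ⟨haB, hae, hlea⟩
  have hcl : M.closure (Abv le B e) = M.closure (Abv le A e) :=
    Set.Subset.antisymm (Matroid.closure_subset_closure_of_subset_closure hsub1)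
      (Matroid.closure_subset_closure_of_subset_closure hsub2)
  exact hmin e ⟨heB.1, hcl ▸ heB.2⟩

lemma cl_diff_eq {X : Set α} {m : α} (hX : X ⊆ M.E) (hm : m ∈ M.closure (Abv le X m)) :
    M.closure (X \ {m}) = M.closure X := by
  have h1 : m ∈ M.closure (X \ {m}) := M.closure_subset_closure Abv_subset hm
  by_cases hmX : m ∈ X
  · have := Matroid.closure_insert_eq_of_mem_closure h1
    rw [Set.insert_diff_singleton, Set.insert_eq_of_mem hmX] at this
    exact this.symm
  · rw [Set.diff_singleton_eq_self hmX]

lemma cl_toggle {A B : Set α} (hA : A ⊆ M.E) (hB : B ⊆ M.E) {m : α}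
    (hm : m ∈ M.closure (Abv le A m)) (hd : B \ {m} = A \ {m}) :
    M.closure B = M.closure A := by
  rw [← cl_diff_eq hA hm, ← cl_diff_eq hB (abv_eq_of_diff_eq hd ▸ hm), hd]

open scoped Classical in
noncomputable def tog (M : Matroid α) (le : α → α → Prop) (A : Finset α) : Finset α :=
  if hx : ∃ m, m ∈ S M le ↑A ∧ ∀ y ∈ S M le ↑A, le m y then
    (if hx.choose ∈ A then A.erase hx.choose else insert hx.choose A) else A

lemma tog_spec (h : IsLinearOrder α le) (hME : M.E.Finite) {A : Finset α} (hA : ↑A ⊆ M.E)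
    (hNF : NF M le ↑A) :
    ↑(tog M le A) ⊆ M.E ∧ NF M le ↑(tog M le A) ∧
      M.closure ↑(tog M le A) = M.closure ↑A ∧ tog M le (tog M le A) = A ∧
      ((tog M le A).card = A.card + 1 ∨ A.card = (tog M le A).card + 1) := by
  classical
  have tog_eq : ∀ (B : Finset α) (hxB : ∃ m ∈ S M le ↑B, ∀ y ∈ S M le ↑B, le m y),
      tog M le B = if hxB.choose ∈ B then B.erase hxB.choose else insert hxB.choose B := by
    intro B hxB
    unfold tog; rw [dif_pos hxB]
  have hx : ∃ m, m ∈ S M le ↑A ∧ ∀ y ∈ S M le ↑A, le m y :=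
    exists_min h (hME.subset S_subset_ground) hNF
  obtain ⟨hm, hmin⟩ := hx.choose_spec
  set m := hx.choose with hmdef
  have htog : tog M le A = if m ∈ A then A.erase m else insert m A := tog_eq A hx
  by_cases hmA : m ∈ A
  · rw [if_pos hmA] at htog
    have hcoe : (↑(tog M le A) : Set α) = ↑A \ {m} := by rw [htog, Finset.coe_erase]
    have hBE : (↑(tog M le A) : Set α) ⊆ M.E := hcoe ▸ (Set.diff_subset.trans hA)
    have hd : (↑(tog M le A) : Set α) \ {m} = ↑A \ {m} := by
      rw [hcoe, Set.diff_diff, Set.union_self]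
    obtain ⟨hmB, hminB⟩ := S_toggle h hBE hm hmin hd
    have hcl : M.closure ↑(tog M le A) = M.closure ↑A := cl_toggle hA hBE hm.2 hd
    refine ⟨hBE, ⟨m, hmB⟩, hcl, ?_, Or.inr (by rw [htog, Finset.card_erase_add_one hmA])⟩
    have hx' : ∃ m', m' ∈ S M le ↑(tog M le A) ∧ ∀ y ∈ S M le ↑(tog M le A), le m' y :=
      ⟨m, hmB, hminB⟩
    have heq : hx'.choose = m :=
      h.toAntisymm.antisymm _ _
        (hx'.choose_spec.2 m hmB) (hminB _ hx'.choose_spec.1)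
    rw [tog_eq _ hx', heq, htog, if_neg (Finset.notMem_erase m A), Finset.insert_erase hmA]
  · rw [if_neg hmA] at htog
    have hmA' : m ∉ (↑A : Set α) := by simpa using hmA
    have hcoe : (↑(tog M le A) : Set α) = insert m ↑A := by rw [htog, Finset.coe_insert]
    have hBE : (↑(tog M le A) : Set α) ⊆ M.E := by
      rw [hcoe]; exact Set.insert_subset hm.1 hA
    have hd : (↑(tog M le A) : Set α) \ {m} = ↑A \ {m} := by
      rw [hcoe, Set.insert_diff_self_of_notMem hmA', Set.diff_singleton_eq_self hmA']
    obtain ⟨hmB, hminB⟩ := S_toggle h hBE hm hmin hd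
    have hcl : M.closure ↑(tog M le A) = M.closure ↑A := cl_toggle hA hBE hm.2 hd
    refine ⟨hBE, ⟨m, hmB⟩, hcl, ?_,
      Or.inl (by rw [htog, Finset.card_insert_of_notMem hmA])⟩
    have hx' : ∃ m', m' ∈ S M le ↑(tog M le A) ∧ ∀ y ∈ S M le ↑(tog M le A), le m' y :=
      ⟨m, hmB, hminB⟩
    have heq : hx'.choose = m :=
      h.toAntisymm.antisymm _ _
        (hx'.choose_spec.2 m hmB) (hminB _ hx'.choose_spec.1)
    rw [tog_eq _ hx', heq, htog, if_pos (Finset.mem_insert_self m A), Finset.erase_insert hmA]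

open scoped Classical in
lemma count_lemma (h : IsLinearOrder α le) (hME : M.E.Finite)
    (hloop : ∀ x ∈ M.E, M.Indep {x}) (ℓ : ℕ) :
    ∑ A ∈ hME.toFinset.powerset.filter
        (fun A : Finset α => ∃ I, M.Indep I ∧ I.encard = (ℓ : ℕ∞) ∧ M.closure I = M.closure ↑A),
      ((-1 : ℤ)) ^ A.card
      = (-1) ^ ℓ * ({X | NBCR M le X ∧ X.ncard = ℓ}.ncard : ℤ) := by
  set P : Finset α → Prop :=
    fun A => ∃ I, M.Indep I ∧ I.encard = (ℓ : ℕ∞) ∧ M.closure I = M.closure ↑A with hP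
  set s : Finset (Finset α) := hME.toFinset.powerset.filter P with hs
  set Q : Finset α → Prop := fun A => NF M le ↑A with hQ
  have hsub : ∀ A ∈ s, ↑A ⊆ M.E := by
    intro A hA
    have := Finset.mem_powerset.mp (Finset.mem_filter.mp hA).1
    rw [← hME.coe_toFinset]
    exact Finset.coe_subset.mpr this
  rw [← Finset.sum_filter_add_sum_filter_not s Q]
  have hnf0 : ∑ A ∈ s.filter Q, ((-1 : ℤ)) ^ A.card = 0 := by
    refine Finset.sum_involution (fun A _ => tog M le A) ?_ ?_ ?_ ?_
    · intro A hA
      obtain ⟨_, _, _, _, hcard⟩ :=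
        tog_spec h hME (hsub A (Finset.mem_filter.mp hA).1) (Finset.mem_filter.mp hA).2
      rcases hcard with hc | hc <;> rw [hc] <;> ring
    · intro A hA _
      obtain ⟨_, _, _, _, hcard⟩ :=
        tog_spec h hME (hsub A (Finset.mem_filter.mp hA).1) (Finset.mem_filter.mp hA).2
      intro heq
      have heq' : tog M le A = A := heq
      rw [heq'] at hcard
      omega
    · intro A hA
      obtain ⟨hBE, hNFB, hclB, _, _⟩ :=
        tog_spec h hME (hsub A (Finset.mem_filter.mp hA).1) (Finset.mem_filter.mp hA).2
      obtain ⟨I, hI, hIc, hIcl⟩ := (Finset.mem_filter.mp (Finset.mem_filter.mp hA).1).2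
      refine Finset.mem_filter.mpr ⟨Finset.mem_filter.mpr ⟨?_, ⟨I, hI, hIc, hIcl.trans hclB.symm⟩⟩, hNFB⟩
      rw [Finset.mem_powerset, ← Finset.coe_subset, hME.coe_toFinset]
      exact hBE
    · intro A hA
      exact (tog_spec h hME (hsub A (Finset.mem_filter.mp hA).1)
        (Finset.mem_filter.mp hA).2).2.2.2.1
  have hfix_nbc : ∀ A ∈ s.filter (fun A => ¬ Q A), NBCR M le ↑A := by
    intro A hA
    exact (not_nf_iff h hloop (hsub A (Finset.mem_filter.mp hA).1) A.finite_toSet).mp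
      (Finset.mem_filter.mp hA).2
  have hfix_card : ∀ A ∈ s.filter (fun A => ¬ Q A), A.card = ℓ := by
    intro A hA
    obtain ⟨I, hI, hIc, hIcl⟩ := (Finset.mem_filter.mp (Finset.mem_filter.mp hA).1).2
    have h1 := Matroid.Indep.isBasis_closure hI
    rw [hIcl] at h1
    have h2 := Matroid.Indep.isBasis_closure (hfix_nbc A hA).1
    have h3 := h1.encard_eq_encard h2
    rw [hIc, Set.encard_coe_eq_coe_finsetCard] at h3
    exact_mod_cast h3.symm
  have hset : {X | NBCR M le X ∧ X.ncard = ℓ}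
      = (fun A : Finset α => (A : Set α)) '' ↑(s.filter (fun A => ¬ Q A)) := by
    ext X
    simp only [Set.mem_setOf_eq, Set.mem_image, Finset.mem_coe]
    constructor
    · rintro ⟨hNBC, hcard⟩
      have hXE : X ⊆ M.E := hNBC.1.subset_ground
      have hXfin : X.Finite := hME.subset hXE
      refine ⟨hXfin.toFinset, ?_, hXfin.coe_toFinset⟩
      have hPX : P hXfin.toFinset := by
        refine ⟨X, hNBC.1, ?_, by rw [hXfin.coe_toFinset]⟩
        rw [← hXfin.cast_ncard_eq, hcard]
      refine Finset.mem_filter.mpr ⟨Finset.mem_filter.mpr ⟨?_, hPX⟩, ?_⟩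
      · rw [Finset.mem_powerset, ← Finset.coe_subset, hME.coe_toFinset, hXfin.coe_toFinset]
        exact hXE
      · rw [not_nf_iff h hloop (by rw [hXfin.coe_toFinset]; exact hXE) (by
          rw [hXfin.coe_toFinset]; exact hXfin)]
        rw [hXfin.coe_toFinset]
        exact hNBC
    · rintro ⟨A, hA, rfl⟩
      exact ⟨hfix_nbc A hA, by rw [Set.ncard_coe_finset]; exact hfix_card A hA⟩
  rw [hset, Set.ncard_image_of_injective _ Finset.coe_injective, Set.ncard_coe_finset]
  have hsum2 : ∑ A ∈ s.filter (fun A => ¬ Q A), ((-1:ℤ))^A.card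
      = (s.filter (fun A => ¬ Q A)).card • ((-1:ℤ))^ℓ := by
    rw [← Finset.sum_const]
    exact Finset.sum_congr rfl (fun A hA => by rw [hfix_card A hA])
  rw [hnf0, hsum2, zero_add, nsmul_eq_mul]
  ring

end NBCaux

/-- For a simple matroid `M` of rank `r` on a finite ground set and `ℓ ≤ r`, the
number of `ℓ`-element NBC sets does not depend on the linear ordering of the ground
set: for any two linear orders `le₁`, `le₂` the corresponding families of `ℓ`-element
no-broken-circuit sets have the same cardinality. -/
theorem nbc_count_order_independent {α : Type*} (M : Matroid α) (hE : M.E.Finite)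
    (hsimple : (∀ x ∈ M.E, M.Indep {x}) ∧
      ∀ x ∈ M.E, ∀ y ∈ M.E, x ≠ y → M.Indep {x, y})
    (r ℓ : ℕ) (hr : ∃ B, M.IsBase B ∧ B.ncard = r) (hℓ : ℓ ≤ r)
    (le₁ le₂ : α → α → Prop)
    (h₁ : IsLinearOrder α le₁) (h₂ : IsLinearOrder α le₂) :
    {X | NBCR M le₁ X ∧ X.ncard = ℓ}.ncard = {X | NBCR M le₂ X ∧ X.ncard = ℓ}.ncard := by
  have key1 := NBCaux.count_lemma h₁ hE hsimple.1 ℓ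
  have key2 := NBCaux.count_lemma h₂ hE hsimple.1 ℓ
  have hkey := key1.symm.trans key2
  have hpow : ((-1 : ℤ)) ^ ℓ ≠ 0 := pow_ne_zero _ (by norm_num)
  have := mul_left_cancel₀ hpow hkey
  exact_mod_cast this
end

section
/- Let M be a loop-free matroid on a linearly ordered ground set. Every broken circuit of M contains a minimal broken circuit of the form C \ min(C) where the circuit C satisfies min(C) = min(cl(C)). Consequently, a set X is an NBC set iff X contains no broken circuit C \ min(C) with C ranging only over circuits with min(C) = min(cl(C \ min(C)) ∪ {min C}). -/
open Set

theorem Set.Finite.exists_minimal_wrt {α β : Type*} [PartialOrder β] (f : α → β) (s : Set α)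
    (h : s.Finite) (hs : s.Nonempty) : ∃ a ∈ s, ∀ a' ∈ s, f a' ≤ f a → f a = f a' := by
  obtain ⟨a, ha, hmin⟩ := h.exists_minimalFor f s hs
  exact ⟨a, ha, fun a' ha' hle => le_antisymm (hmin ha' hle) hle⟩

/-- In a loop-free matroid on a linearly ordered finite ground set, every broken
circuit contains an inclusion-minimal broken circuit `C \ min C` coming from a
circuit `C` with `min C = min (cl C)`.  Consequently, a set `X ⊆ M.E` contains no
broken circuit iff it contains no broken circuit `C \ min C` with `C` ranging only
over circuits satisfying `min C = min (cl C)`. -/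
theorem broken_circuit_reduction {α : Type*} [LinearOrder α] (M : Matroid α)
    (hE : M.E.Finite) (hloopfree : ∀ x ∈ M.E, M.Indep {x}) :
    (∀ B, BrokenCircuit M B → ∃ C m, IsCircuit M C ∧ m ∈ C ∧ (∀ y ∈ C, m ≤ y) ∧
      (∀ y ∈ M.closure C, m ≤ y) ∧ C \ {m} ⊆ B ∧
      ∀ C' m', IsCircuit M C' → m' ∈ C' → (∀ y ∈ C', m' ≤ y) →
        (∀ y ∈ M.closure C', m' ≤ y) → C' \ {m'} ⊆ C \ {m} → C' \ {m'} = C \ {m}) ∧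
    ∀ X ⊆ M.E, ((∀ B, BrokenCircuit M B → ¬ B ⊆ X) ↔
      ∀ C m, IsCircuit M C → m ∈ C → (∀ y ∈ C, m ≤ y) → (∀ y ∈ M.closure C, m ≤ y) →
        ¬ (C \ {m} ⊆ X)) := by
  -- Auxiliary: every finite dependent set contains a circuit.
  have exists_circuit : ∀ D : Set α, D.Finite → M.Dep D → ∃ C, C ⊆ D ∧ IsCircuit M C := by
    intro D hfin hD
    obtain ⟨C, hCs, hCmin⟩ := Set.Finite.exists_minimal_wrt id {T | T ⊆ D ∧ M.Dep T}
      (hfin.finite_subsets.subset fun T hT => hT.1) ⟨D, subset_rfl, hD⟩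
    refine ⟨C, hCs.1, hCs.2, fun D' hss hdep => ?_⟩
    have := hCmin D' ⟨hss.subset.trans hCs.1, hdep⟩ hss.subset
    exact hss.ne this.symm
  -- Auxiliary: a circuit minus an element of it that lies in the ground set is nonempty.
  have bc_nonempty : ∀ C m, IsCircuit M C → m ∈ C → (C \ {m}).Nonempty := by
    intro C m hC hm
    rcases Set.eq_empty_or_nonempty (C \ {m}) with h | h
    · exfalso
      have hCm : C = {m} := by
        apply Set.eq_singleton_iff_unique_mem.2 ⟨hm, fun x hx => ?_⟩
        by_contra hne
        exact Set.eq_empty_iff_forall_notMem.1 h x ⟨hx, hne⟩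
      have hmE : m ∈ M.E := hC.1.subset_ground hm
      exact (hloopfree m hmE).not_dep (hCm ▸ hC.1)
    · exact h
  have hpart1 : ∀ B, BrokenCircuit M B → ∃ C m, IsCircuit M C ∧ m ∈ C ∧ (∀ y ∈ C, m ≤ y) ∧
      (∀ y ∈ M.closure C, m ≤ y) ∧ C \ {m} ⊆ B ∧
      ∀ C' m', IsCircuit M C' → m' ∈ C' → (∀ y ∈ C', m' ≤ y) →
        (∀ y ∈ M.closure C', m' ≤ y) → C' \ {m'} ⊆ C \ {m} → C' \ {m'} = C \ {m} := by
    intro B hB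
    have hBE : B ⊆ M.E := by
      obtain ⟨C, m, hC, _, _, _, rfl⟩ := hB
      exact (Set.diff_subset).trans hC.1.subset_ground
    -- choose an inclusion-minimal broken circuit contained in B
    obtain ⟨B₀, hB₀s, hB₀min⟩ := Set.Finite.exists_minimal_wrt id
      {B' | B' ⊆ B ∧ BrokenCircuit M B'}
      (((hE.subset hBE).finite_subsets).subset fun B' h => h.1) ⟨B, subset_rfl, hB⟩
    obtain ⟨hB₀B, hB₀bc⟩ := hB₀s
    -- among circuits giving broken circuit B₀, choose one with minimal minimum
    set S : Set α := {m' | ∃ C', IsCircuit M C' ∧ m' ∈ C' ∧ (∀ y ∈ C', m' ≤ y) ∧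
      B₀ = C' \ {m'}} with hS
    have hSne : S.Nonempty := by
      obtain ⟨C, m, hC, hm, hmin, _, hBeq⟩ := hB₀bc
      exact ⟨m, C, hC, hm, hmin, hBeq⟩
    have hSE : S ⊆ M.E := by
      rintro m' ⟨C', hC', hm', _, _⟩
      exact hC'.1.subset_ground hm'
    obtain ⟨m₀, hm₀S, hm₀min⟩ := Set.Finite.exists_minimal_wrt id S (hE.subset hSE) hSne
    obtain ⟨C₀, hC₀, hm₀C₀, hm₀minC₀, hB₀eq⟩ := hm₀S
    -- key facts
    have hB₀indep : M.Indep B₀ := by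
      by_contra hni
      have hdep : M.Dep B₀ := ⟨hni, hB₀eq ▸ Set.diff_subset.trans hC₀.1.subset_ground⟩
      have hss : B₀ ⊂ C₀ := by
        rw [hB₀eq]
        exact ⟨Set.diff_subset, fun h => (h hm₀C₀).2 rfl⟩
      exact hC₀.2 B₀ hss hdep
    have hins : insert m₀ B₀ = C₀ := by
      rw [hB₀eq, Set.insert_diff_singleton, Set.insert_eq_of_mem hm₀C₀]
    have hm₀cl : m₀ ∈ M.closure B₀ := by
      rw [hB₀indep.mem_closure_iff]
      left; rw [hins]; exact hC₀.1
    have hclC₀ : M.closure C₀ = M.closure B₀ := by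
      rw [← hins]
      exact Matroid.closure_insert_eq_of_mem_closure hm₀cl
    -- closure minimality of m₀
    have hclmin : ∀ y ∈ M.closure C₀, m₀ ≤ y := by
      intro y hy
      by_contra hlt
      push_neg at hlt
      have hyB₀ : y ∉ B₀ := by
        intro hyB
        have : m₀ ≤ y := hm₀minC₀ y (hB₀eq ▸ hyB).1
        exact absurd this (not_le.2 hlt)
      have hyE : y ∈ M.E := M.closure_subset_ground C₀ hy
      have hycl : y ∈ M.closure B₀ := hclC₀ ▸ hy
      have hdep : M.Dep (insert y B₀) := by
        rcases hB₀indep.mem_closure_iff.1 hycl with h | h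
        · exact h
        · exact absurd h hyB₀
      obtain ⟨C₃, hC₃s, hC₃⟩ := exists_circuit (insert y B₀)
        ((hE.subset hBE).subset hB₀B |>.insert y) hdep
      have hyC₃ : y ∈ C₃ := by
        by_contra hyn
        have : C₃ ⊆ B₀ := fun x hx => (hC₃s hx).resolve_left (fun h => hyn (h ▸ hx))
        exact hC₃.1.not_indep (hB₀indep.subset this)
      have hC₃min : ∀ z ∈ C₃, y ≤ z := by
        intro z hz
        rcases hC₃s hz with h | h
        · exact le_of_eq h.symm
        · exact le_of_lt (lt_of_lt_of_le hlt (hm₀minC₀ z (hB₀eq ▸ h).1))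
      have hC₃sub : C₃ \ {y} ⊆ B₀ := by
        rintro x ⟨hx, hne⟩
        exact (hC₃s hx).resolve_left hne
      have hC₃ne : (C₃ \ {y}).Nonempty := bc_nonempty C₃ y hC₃ hyC₃
      have hbc₃ : BrokenCircuit M (C₃ \ {y}) := ⟨C₃, y, hC₃, hyC₃, hC₃min, hC₃ne, rfl⟩
      have heq : B₀ = C₃ \ {y} :=
        hB₀min (C₃ \ {y}) ⟨hC₃sub.trans hB₀B, hbc₃⟩ hC₃sub
      have : y ∈ S := ⟨C₃, hC₃, hyC₃, hC₃min, heq⟩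
      have := hm₀min y this (le_of_lt hlt)
      exact absurd this (ne_of_gt hlt)
    refine ⟨C₀, m₀, hC₀, hm₀C₀, hm₀minC₀, hclmin, hB₀eq ▸ hB₀B, ?_⟩
    intro C' m' hC' hm' hmin' _ hsub
    have hbc' : BrokenCircuit M (C' \ {m'}) :=
      ⟨C', m', hC', hm', hmin', bc_nonempty C' m' hC' hm', rfl⟩
    have := hB₀min (C' \ {m'}) ⟨(hB₀eq ▸ hsub).trans hB₀B, hbc'⟩ (hB₀eq ▸ hsub)
    simp only [id] at this
    rw [← hB₀eq, ← this]
  refine ⟨hpart1, fun X _ => ⟨fun h C m hC hm hmin _ hsub => ?_, fun h B hB hBX => ?_⟩⟩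
  · exact h (C \ {m}) ⟨C, m, hC, hm, hmin, bc_nonempty C m hC hm, rfl⟩ hsub
  · obtain ⟨C, m, hC, hm, hmin, hclmin, hsubB, _⟩ := hpart1 B hB
    exact h C m hC hm hmin hclmin (hsubB.trans hBX)
end
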